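/- Let f : ℝ → ℝ be a measurable probability density (f ≥ 0, ∫_ℝ f = 1) that is bounded, i.e., there is M ≥ 0 with f(x) ≤ M for all x. Then the series ∑_{n=1}^∞ ((−1)^n / n!) · ∫_ℝ f(x)^{n+1} dx converges and ∫_ℝ f(x)·e^{-f(x)} dx = 1 + ∑_{n=1}^∞ ((−1)^n / n!) · ∫_ℝ f(x)^{n+1} dx. -/

import Mathlib

open MeasureTheory Real

/-- For a bounded measurable probability density `f`, the series
`∑_{n=1}^∞ ((-1)^n / n!) ∫ f(x)^{n+1} dx` converges (here reindexed over `n : ℕ`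
via `n ↦ n+1`) and the DMIM equals `1` plus its sum. -/
theorem dmim_series (f : ℝ → ℝ) (hf : Measurable f) (hf0 : ∀ x, 0 ≤ f x)
    (hf1 : (∫ x, f x) = 1) (M : ℝ) (hM : 0 ≤ M) (hfM : ∀ x, f x ≤ M) :
    Summable (fun n : ℕ =>
        ((-1 : ℝ) ^ (n + 1) / (n + 1).factorial) * ∫ x, (f x) ^ (n + 2)) ∧
      (∫ x, f x * Real.exp (-(f x))) =
        1 + ∑' n : ℕ, ((-1 : ℝ) ^ (n + 1) / (n + 1).factorial) * ∫ x, (f x) ^ (n + 2) := by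
  have hfint : Integrable f := by
    by_contra h
    rw [integral_undef h] at hf1
    norm_num at hf1
  -- integrability of powers
  have hpow : ∀ k : ℕ, Integrable (fun x => f x ^ (k + 1)) := by
    intro k
    refine (hfint.const_mul (M ^ k)).mono' ((hf.pow_const _).aestronglyMeasurable)
      (Filter.Eventually.of_forall fun x => ?_)
    rw [Real.norm_of_nonneg (pow_nonneg (hf0 x) _), pow_succ]
    exact mul_le_mul_of_nonneg_right (pow_le_pow_left₀ (hf0 x) (hfM x) k) (hf0 x)
  -- bound on integrals of powers
  have hbound : ∀ k : ℕ, |∫ x, f x ^ (k + 1)| ≤ M ^ k := by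
    intro k
    rw [abs_of_nonneg (integral_nonneg fun x => pow_nonneg (hf0 x) _)]
    calc (∫ x, f x ^ (k + 1)) ≤ ∫ x, M ^ k * f x := by
          refine integral_mono (hpow k) (hfint.const_mul _) fun x => ?_
          rw [pow_succ]
          exact mul_le_mul_of_nonneg_right (pow_le_pow_left₀ (hf0 x) (hfM x) k) (hf0 x)
      _ = M ^ k := by rw [integral_const_mul, hf1, mul_one]
  -- summable majorant
  have hmaj : Summable (fun n : ℕ => M ^ n / n.factorial) :=
    Real.summable_pow_div_factorial M
  -- general term summability for the full series (index from 0)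
  have hsum0 : Summable (fun n : ℕ =>
      ((-1 : ℝ) ^ n / n.factorial) * ∫ x, (f x) ^ (n + 1)) := by
    refine Summable.of_norm_bounded hmaj fun n => ?_
    rw [norm_mul, norm_div, norm_pow, norm_neg, norm_one, one_pow, one_div]
    rw [Real.norm_natCast, Real.norm_eq_abs]
    calc (n.factorial : ℝ)⁻¹ * |∫ x, f x ^ (n + 1)| ≤ (n.factorial : ℝ)⁻¹ * M ^ n := by
          exact mul_le_mul_of_nonneg_left (hbound n) (by positivity)
      _ = M ^ n / n.factorial := by ring
  have hsum1 : Summable (fun n : ℕ =>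
      ((-1 : ℝ) ^ (n + 1) / (n + 1).factorial) * ∫ x, (f x) ^ (n + 2)) :=
    hsum0.comp_injective (add_left_injective 1)
  refine ⟨hsum1, ?_⟩
  -- pointwise expansion
  have hpt : ∀ x, f x * Real.exp (-(f x)) =
      ∑' n : ℕ, ((-1 : ℝ) ^ n / n.factorial) * f x ^ (n + 1) := by
    intro x
    rw [Real.exp_eq_exp_ℝ, NormedSpace.exp_eq_tsum_div, ← tsum_mul_left]
    congr 1
    funext n
    rw [neg_pow]
    ring
  -- each summand integrable
  have hint : ∀ n : ℕ, Integrable (fun x => ((-1 : ℝ) ^ n / n.factorial) * f x ^ (n + 1)) :=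
    fun n => (hpow n).const_mul _
  -- summability of integrals of norms
  have hnorm_sum : Summable (fun n : ℕ =>
      ∫ x, ‖((-1 : ℝ) ^ n / n.factorial) * f x ^ (n + 1)‖) := by
    refine Summable.of_nonneg_of_le (fun n => integral_nonneg fun x => norm_nonneg _)
      (fun n => ?_) hmaj
    have : (∫ x, ‖((-1 : ℝ) ^ n / n.factorial) * f x ^ (n + 1)‖)
        ≤ ∫ x, (n.factorial : ℝ)⁻¹ * (M ^ n * f x) := by
      refine integral_mono ((hint n).norm) ((hfint.const_mul _).const_mul _) fun x => ?_
      rw [norm_mul, norm_div, norm_pow, norm_neg, norm_one, one_pow, one_div,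
        Real.norm_natCast, Real.norm_of_nonneg (pow_nonneg (hf0 x) _), pow_succ]
      exact mul_le_mul_of_nonneg_left
        (mul_le_mul_of_nonneg_right (pow_le_pow_left₀ (hf0 x) (hfM x) n) (hf0 x))
        (by positivity)
    refine this.trans ?_
    rw [integral_const_mul, integral_const_mul, hf1, mul_one]
    rw [div_eq_inv_mul]
  -- swap integral and sum
  have hswap : (∫ x, f x * Real.exp (-(f x))) =
      ∑' n : ℕ, ((-1 : ℝ) ^ n / n.factorial) * ∫ x, (f x) ^ (n + 1) := by
    have := integral_tsum_of_summable_integral_norm hint hnorm_sum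
    simp_rw [integral_const_mul] at this
    simp_rw [hpt]
    exact this.symm
  rw [hswap, Summable.tsum_eq_zero_add hsum0]
  norm_num [hf1]
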